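/- For a positive definite k × k correlation matrix Σ and ν > 0, let h_{Σ,ν}(w) = C(Σ,ν) · ( (w^{1/ν})ᵀ Σ^{−1} w^{1/ν} )^{−(k+ν)/2} · ∏_{i=1}^k w_i^{(1−ν)/ν} on int(S^{k−1}), where C(Σ,ν) = π^{(1−k)/2} Γ((ν+1)/2)^{−1} Γ((k+ν)/2) ν^{−k+1} det(Σ)^{−1/2}. Then the partial derivative ∂_ν h_{Σ,ν}(w) exists and for every ε > 0 there is a function C₄(Σ,ν) > 0, continuous in (Σ,ν), such that for all such (Σ,ν) and all w ∈ int(S^{k−1}): |∂_ν h_{Σ,ν}(w)| ≤ (C₄(Σ,ν)/ε) ∏_{i=1}^k w_i^{(1−ν)/ν − ε}. -/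

import Mathlib

open MeasureTheory Real Set Filter Matrix

noncomputable section

/-- The interior of the unit simplex `S^{k−1}`. -/
def intSimplex (k : ℕ) : Set (Fin k → ℝ) := {w | (∀ i, 0 < w i) ∧ ∑ i, w i = 1}

/-- The normalizing constant of the extremal-t angular density:
`C(Σ,ν) = π^{(1−k)/2} Γ((ν+1)/2)⁻¹ Γ((k+ν)/2) ν^{−k+1} det(Σ)^{−1/2}`. -/
noncomputable def extTConst (k : ℕ) (S : Matrix (Fin k) (Fin k) ℝ) (ν : ℝ) : ℝ :=
  Real.pi ^ ((1 - (k : ℝ)) / 2) * (Real.Gamma ((ν + 1) / 2))⁻¹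
    * Real.Gamma (((k : ℝ) + ν) / 2) * ν ^ (-(k : ℝ) + 1) * S.det ^ (-(1 : ℝ) / 2)

/-- The extremal-t angular density on the interior of the simplex:
`h_{Σ,ν}(w) = C(Σ,ν) ((w^{1/ν})ᵀ Σ⁻¹ w^{1/ν})^{−(k+ν)/2} ∏ᵢ wᵢ^{(1−ν)/ν}`. -/
noncomputable def hExtT {k : ℕ} (S : Matrix (Fin k) (Fin k) ℝ) (ν : ℝ) (w : Fin k → ℝ) : ℝ :=
  extTConst k S ν
    * ((fun i => (w i) ^ (1/ν)) ⬝ᵥ (S⁻¹ *ᵥ fun i => (w i) ^ (1/ν))) ^ (-((k : ℝ) + ν) / 2)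
    * ∏ i, (w i) ^ ((1 - ν) / ν)

/-- The parameter set of the extremal-t model: positive definite correlation matrices `Σ`
together with `ν > 0`. -/
def extTParams (k : ℕ) : Set (Matrix (Fin k) (Fin k) ℝ × ℝ) :=
  {p | p.1.PosDef ∧ (∀ i, p.1 i i = 1) ∧ 0 < p.2}


-- ## Auxiliary development

set_option maxHeartbeats 1000000

/-- derivative of the real Gamma function. -/
noncomputable def gammaD (x : ℝ) : ℝ := (deriv Complex.Gamma (x : ℂ)).re

lemma analyticGamma : AnalyticOnNhd ℂ Complex.Gamma {z : ℂ | 0 < z.re} := by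
  refine DifferentiableOn.analyticOnNhd (fun z hz => ?_)
    (isOpen_lt continuous_const Complex.continuous_re)
  refine (Complex.differentiableAt_Gamma z fun m => ?_).differentiableWithinAt
  intro hzm
  have h : (0:ℝ) < z.re := hz
  rw [hzm] at h
  simp only [Complex.neg_re, Complex.natCast_re] at h
  have : (0:ℝ) ≤ (m:ℝ) := Nat.cast_nonneg m
  linarith

lemma continuousAt_gammaD {x : ℝ} (hx : 0 < x) : ContinuousAt gammaD x := by
  have h1 : ContinuousAt (deriv Complex.Gamma) (x : ℂ) :=
    ((analyticGamma.deriv) (x : ℂ) (by simpa using hx)).continuousAt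
  exact (Complex.continuous_re.continuousAt.comp h1).comp
    Complex.continuous_ofReal.continuousAt

lemma hasDerivAt_realGamma {x : ℝ} (hx : 0 < x) : HasDerivAt Real.Gamma (gammaD x) x := by
  have hne : ∀ m : ℕ, (x : ℂ) ≠ -m := by
    intro m hm
    have h2 : ((x:ℂ)).re = ((-m : ℂ)).re := by rw [hm]
    simp only [Complex.ofReal_re, Complex.neg_re, Complex.natCast_re] at h2
    nlinarith [Nat.cast_nonneg (α := ℝ) m]
  have h : HasDerivAt Complex.Gamma (deriv Complex.Gamma (x:ℂ)) (x : ℂ) :=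
    (Complex.differentiableAt_Gamma _ hne).hasDerivAt
  have h2 := h.real_of_complex
  have h3 : (fun y : ℝ => (Complex.Gamma (y:ℂ)).re) = Real.Gamma := by
    funext y; rw [Complex.Gamma_ofReal, Complex.ofReal_re]
  rwa [h3] at h2

/-- explicit derivative of `extTConst` in `ν`. -/
noncomputable def Ad (k : ℕ) (S : Matrix (Fin k) (Fin k) ℝ) (ν : ℝ) : ℝ :=
  (Real.pi ^ ((1 - (k : ℝ)) / 2) * S.det ^ (-(1 : ℝ) / 2)) *
    ( (-(gammaD ((ν + 1) / 2) * (1 / 2)) / Real.Gamma ((ν + 1) / 2) ^ 2)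
        * Real.Gamma (((k : ℝ) + ν) / 2) * ν ^ (-(k : ℝ) + 1)
      + (Real.Gamma ((ν + 1) / 2))⁻¹ * (gammaD (((k : ℝ) + ν) / 2) * (1 / 2))
        * ν ^ (-(k : ℝ) + 1)
      + (Real.Gamma ((ν + 1) / 2))⁻¹ * Real.Gamma (((k : ℝ) + ν) / 2)
        * ((-(k : ℝ) + 1) * ν ^ (-(k : ℝ) + 1 - 1)) )

lemma hasDerivAt_extTConst (k : ℕ) (S : Matrix (Fin k) (Fin k) ℝ) {ν : ℝ} (hν : 0 < ν) :
    HasDerivAt (fun t => extTConst k S t) (Ad k S ν) ν := by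
  have h1i : HasDerivAt (fun t : ℝ => (t + 1) / 2) (1 / 2) ν := by
    simpa using ((hasDerivAt_id ν).add_const (1:ℝ)).div_const 2
  have h2i : HasDerivAt (fun t : ℝ => ((k : ℝ) + t) / 2) (1 / 2) ν := by
    simpa using ((hasDerivAt_id ν).const_add ((k : ℝ))).div_const 2
  have hG1 : HasDerivAt (fun t : ℝ => Real.Gamma ((t + 1) / 2)) (gammaD ((ν + 1) / 2) * (1 / 2)) ν :=
    (hasDerivAt_realGamma (by linarith)).comp ν h1i
  have hG2 : HasDerivAt (fun t : ℝ => Real.Gamma (((k : ℝ) + t) / 2))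
      (gammaD (((k : ℝ) + ν) / 2) * (1 / 2)) ν :=
    (hasDerivAt_realGamma (by positivity)).comp ν h2i
  have hG1ne : Real.Gamma ((ν + 1) / 2) ≠ 0 := (Real.Gamma_pos_of_pos (by linarith)).ne'
  have hinv : HasDerivAt (fun t : ℝ => (Real.Gamma ((t + 1) / 2))⁻¹)
      (-(gammaD ((ν + 1) / 2) * (1 / 2)) / Real.Gamma ((ν + 1) / 2) ^ 2) ν := hG1.inv hG1ne
  have hpow : HasDerivAt (fun t : ℝ => t ^ (-(k : ℝ) + 1))
      ((-(k : ℝ) + 1) * ν ^ (-(k : ℝ) + 1 - 1)) ν :=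
    Real.hasDerivAt_rpow_const (Or.inl hν.ne')
  have h := ((((hinv.const_mul (Real.pi ^ ((1 - (k : ℝ)) / 2))).mul hG2).mul hpow).mul_const
      (S.det ^ (-(1 : ℝ) / 2)))
  exact h.congr_deriv (by unfold Ad; simp only [Pi.mul_apply]; ring)

-- small analytic lemmas
lemma rpow_neg_log_le {u a : ℝ} (hu : 0 < u) (hu1 : u ≤ 1) (ha : 0 < a) :
    u ^ a * (-Real.log u) ≤ 1 / a := by
  set y := -Real.log u with hy
  have hy0 : 0 ≤ y := by
    rw [hy]
    simpa using Real.log_nonpos hu.le hu1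
  have hru : u ^ a = Real.exp (-(a * y)) := by
    rw [Real.rpow_def_of_pos hu, hy]; ring_nf
  rw [hru, Real.exp_neg]
  have hexp : a * y ≤ Real.exp (a * y) := by
    have := Real.add_one_le_exp (a * y); linarith
  have hepos : 0 < Real.exp (a * y) := Real.exp_pos _
  rw [inv_mul_eq_div, div_le_div_iff₀ hepos ha]
  calc y * a = a * y := by ring
    _ ≤ Real.exp (a * y) := hexp
    _ = Real.exp (a * y) * 1 := by ring
    _ ≤ 1 * Real.exp (a * y) := by linarith

lemma neg_log_le_rpow_div {u c : ℝ} (hu : 0 < u) (hu1 : u ≤ 1) (hc : 0 < c) :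
    -Real.log u ≤ u ^ (-c) / c := by
  set y := -Real.log u with hy
  have hy0 : 0 ≤ y := by rw [hy]; simpa using Real.log_nonpos hu.le hu1
  have hru : u ^ (-c) = Real.exp (c * y) := by
    rw [Real.rpow_def_of_pos hu, hy]; ring_nf
  rw [hru, le_div_iff₀ hc]
  have := Real.add_one_le_exp (c * y)
  nlinarith

lemma term_le_abs {a b c : ℝ} (ha0 : 0 ≤ a) (ha1 : a ≤ 1) (hc0 : 0 ≤ c) (hc1 : c ≤ 1) :
    a * (b * c) ≤ |b| := by
  calc a * (b * c) ≤ |a * (b * c)| := le_abs_self _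
    _ = a * (|b| * c) := by
        rw [abs_mul, abs_mul, abs_of_nonneg ha0, abs_of_nonneg hc0]
    _ ≤ 1 * (|b| * 1) := by
        have hb := abs_nonneg b
        gcongr
    _ = |b| := by ring

lemma posdef_dot {k : ℕ} {S : Matrix (Fin k) (Fin k) ℝ} (hS : S.PosDef) {v : Fin k → ℝ}
    (hv : v ≠ 0) : 0 < v ⬝ᵥ (S *ᵥ v) := by
  have := hS.dotProduct_mulVec_pos hv
  simpa using this

lemma possemidef_dot {k : ℕ} {S : Matrix (Fin k) (Fin k) ℝ} (hS : S.PosSemidef)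
    (v : Fin k → ℝ) : 0 ≤ v ⬝ᵥ (S *ᵥ v) := by
  have := hS.dotProduct_mulVec_nonneg v
  simpa using this

lemma cs_ineq {k : ℕ} {S : Matrix (Fin k) (Fin k) ℝ} (hS : S.PosDef) {v : Fin k → ℝ}
    (hv : v ≠ 0) : (v ⬝ᵥ v) ^ 2 ≤ (v ⬝ᵥ (S⁻¹ *ᵥ v)) * (v ⬝ᵥ (S *ᵥ v)) := by
  have hdet : IsUnit S.det := S.isUnit_iff_isUnit_det.mp hS.isUnit
  have hMS : ∀ y : Fin k → ℝ, S⁻¹ *ᵥ (S *ᵥ y) = y := by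
    intro y
    rw [Matrix.mulVec_mulVec, Matrix.nonsing_inv_mul S hdet, Matrix.one_mulVec]
  have hsymm : Sᵀ = S := by
    have h := hS.isHermitian.eq
    rwa [Matrix.conjTranspose_eq_transpose_of_trivial] at h
  have hsym2 : (S *ᵥ v) ⬝ᵥ (S⁻¹ *ᵥ v) = v ⬝ᵥ v := by
    have h1 : (S⁻¹ *ᵥ v) ᵥ* S = v := by
      rw [← Matrix.mulVec_transpose, hsymm, Matrix.mulVec_mulVec,
        Matrix.mul_nonsing_inv S hdet, Matrix.one_mulVec]
    rw [dotProduct_comm, Matrix.dotProduct_mulVec, h1]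
  have hs2pos : 0 < v ⬝ᵥ (S *ᵥ v) := posdef_dot hS hv
  set u := v ⬝ᵥ v with hu
  set s2 := v ⬝ᵥ (S *ᵥ v) with hs2
  set Q := v ⬝ᵥ (S⁻¹ *ᵥ v) with hQ
  set c := u / s2 with hc
  have hcomm : (S *ᵥ v) ⬝ᵥ v = s2 := dotProduct_comm _ _
  have h0 : 0 ≤ (v - c • (S *ᵥ v)) ⬝ᵥ (S⁻¹ *ᵥ (v - c • (S *ᵥ v))) :=
    possemidef_dot hS.inv.posSemidef _
  have hexp : (v - c • (S *ᵥ v)) ⬝ᵥ (S⁻¹ *ᵥ (v - c • (S *ᵥ v)))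
      = Q - 2 * c * u + c ^ 2 * s2 := by
    simp only [Matrix.mulVec_sub, Matrix.mulVec_smul, hMS v, sub_dotProduct,
      dotProduct_sub, smul_dotProduct, dotProduct_smul,
      smul_eq_mul, hsym2, hcomm, ← hQ, ← hu]
    ring
  rw [hexp] at h0
  have h2 : c * s2 = u := by rw [hc]; field_simp
  nlinarith [h0, h2, hs2pos, sq_nonneg u]

variable {k : ℕ}

noncomputable def mS (p : Matrix (Fin k) (Fin k) ℝ × ℝ) : ℝ := ∑ i, ∑ j, |p.1⁻¹ i j|
noncomputable def sS (p : Matrix (Fin k) (Fin k) ℝ × ℝ) : ℝ := ∑ i, ∑ j, |p.1 i j|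
noncomputable def qlow (k : ℕ) (p : Matrix (Fin k) (Fin k) ℝ × ℝ) : ℝ :=
  (k : ℝ) ^ (-(4 : ℝ) / p.2) / sS p
noncomputable def bmax (k : ℕ) (p : Matrix (Fin k) (Fin k) ℝ × ℝ) : ℝ :=
  qlow k p ^ (-((k : ℝ) + p.2) / 2)
noncomputable def bmax2 (k : ℕ) (p : Matrix (Fin k) (Fin k) ℝ × ℝ) : ℝ :=
  qlow k p ^ (-((k : ℝ) + p.2) / 2 - 1)
noncomputable def C4 (k : ℕ) (ε : ℝ) (p : Matrix (Fin k) (Fin k) ℝ × ℝ) : ℝ :=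
  ε * ( |Ad k p.1 p.2| * bmax k p
      + extTConst k p.1 p.2 * ( ((k : ℝ) + p.2) * mS p / p.2 * bmax2 k p
          + (|Real.log (qlow k p)| + |Real.log (mS p)|) / 2 * bmax k p ) )
  + extTConst k p.1 p.2 * bmax k p / p.2 ^ 2

section facts
variable (hk : 0 < k) {p : Matrix (Fin k) (Fin k) ℝ × ℝ} (hp : p ∈ extTParams k)

lemma hdet (hp : p ∈ extTParams k) : 0 < p.1.det := hp.1.det_pos

lemma hApos (hp : p ∈ extTParams k) : 0 < extTConst k p.1 p.2 := by
  have h1 : 0 < Real.Gamma ((p.2 + 1) / 2) := Real.Gamma_pos_of_pos (by have := hp.2.2; linarith)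
  have h2 : 0 < Real.Gamma (((k : ℝ) + p.2) / 2) :=
    Real.Gamma_pos_of_pos (by have := hp.2.2; positivity)
  have h3 := hp.2.2
  have h4 := hp.1.det_pos
  unfold extTConst
  positivity

lemma diagPos (hM : (p.1⁻¹).PosDef) (i : Fin k) : 0 < p.1⁻¹ i i := by
  have h := hM.dotProduct_mulVec_pos (x := Pi.single i 1) (by
    intro h0
    have := congrFun h0 i
    simp at this)
  simpa [Matrix.mulVec_single, dotProduct, Pi.single_apply] using h

lemma hsSpos (hk : 0 < k) (hp : p ∈ extTParams k) : 0 < sS p := by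
  have i0 : Fin k := ⟨0, hk⟩
  have h1 : |p.1 i0 i0| = 1 := by rw [hp.2.1 i0]; simp
  have : (1:ℝ) ≤ sS p := by
    rw [← h1]
    unfold sS
    refine le_trans (Finset.single_le_sum (f := fun j => |p.1 i0 j|)
      (fun j _ => abs_nonneg _) (Finset.mem_univ i0)) ?_
    exact Finset.single_le_sum (f := fun i => ∑ j, |p.1 i j|)
      (fun i _ => Finset.sum_nonneg fun j _ => abs_nonneg _) (Finset.mem_univ i0)
  linarith

lemma hmSpos (hk : 0 < k) (hp : p ∈ extTParams k) : 0 < mS p := by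
  have i0 : Fin k := ⟨0, hk⟩
  have h0 := diagPos hp.1.inv i0
  calc (0:ℝ) < |p.1⁻¹ i0 i0| := by rwa [abs_of_pos h0]
    _ ≤ ∑ j, |p.1⁻¹ i0 j| :=
        Finset.single_le_sum (f := fun j => |p.1⁻¹ i0 j|)
          (fun j _ => abs_nonneg _) (Finset.mem_univ i0)
    _ ≤ mS p := Finset.single_le_sum (f := fun i => ∑ j, |p.1⁻¹ i j|)
        (fun i _ => Finset.sum_nonneg fun j _ => abs_nonneg _) (Finset.mem_univ i0)

lemma hqlowpos (hk : 0 < k) (hp : p ∈ extTParams k) : 0 < qlow k p := by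
  have h1 := hsSpos hk hp
  have h2 : (0:ℝ) < (k : ℝ) := by exact_mod_cast hk
  unfold qlow; positivity

lemma hbmaxpos (hk : 0 < k) (hp : p ∈ extTParams k) : 0 < bmax k p :=
  Real.rpow_pos_of_pos (hqlowpos hk hp) _

lemma hbmax2pos (hk : 0 < k) (hp : p ∈ extTParams k) : 0 < bmax2 k p :=
  Real.rpow_pos_of_pos (hqlowpos hk hp) _

lemma hC4pos (hk : 0 < k) {ε : ℝ} (hε : 0 < ε) (hp : p ∈ extTParams k) : 0 < C4 k ε p := by
  have h1 := hApos hp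
  have h2 := hbmaxpos hk hp
  have h3 := hbmax2pos hk hp
  have h4 := hmSpos hk hp
  have h5 := hp.2.2
  have h6 : (0:ℝ) ≤ (k:ℝ) := Nat.cast_nonneg k
  have h7 : 0 ≤ |Ad k p.1 p.2| := abs_nonneg _
  unfold C4
  have hterm : 0 < extTConst k p.1 p.2 * bmax k p / p.2 ^ 2 := by positivity
  have hfirst : 0 ≤ ε * ( |Ad k p.1 p.2| * bmax k p
      + extTConst k p.1 p.2 * ( ((k : ℝ) + p.2) * mS p / p.2 * bmax2 k p
          + (|Real.log (qlow k p)| + |Real.log (mS p)|) / 2 * bmax k p ) ) := by positivity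
  linarith
end facts

section cont
variable {k : ℕ}

lemma contC4 (hk : 0 < k) (ε : ℝ) : ContinuousOn (C4 k ε) (extTParams k) := by
  intro p hp
  apply ContinuousAt.continuousWithinAt
  have hν := hp.2.2
  have hfst : ContinuousAt (fun q : Matrix (Fin k) (Fin k) ℝ × ℝ => q.1) p :=
    continuous_fst.continuousAt
  have hsnd : ContinuousAt (fun q : Matrix (Fin k) (Fin k) ℝ × ℝ => q.2) p :=
    continuous_snd.continuousAt
  have hdetc : ContinuousAt (fun q : Matrix (Fin k) (Fin k) ℝ × ℝ => q.1.det) p :=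
    (continuous_fst.matrix_det).continuousAt
  have hdetne : p.1.det ≠ 0 := (hdet hp).ne'
  have hinvc : ContinuousAt (fun q : Matrix (Fin k) (Fin k) ℝ × ℝ => q.1⁻¹) p := by
    refine ContinuousAt.comp ?_ hfst
    exact continuousAt_matrix_inv p.1 (by rw [Ring.inverse_eq_inv']; exact continuousAt_inv₀ hdetne)
  -- mS, sS
  have hmSc : ContinuousAt (mS (k := k)) p := by
    unfold mS
    refine tendsto_finset_sum _ fun i _ => tendsto_finset_sum _ fun j _ => ?_
    exact ContinuousAt.abs (ContinuousAt.comp (x := p)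
      (g := fun M : Matrix (Fin k) (Fin k) ℝ => M i j)
      (((continuous_apply j).comp (continuous_apply i)).continuousAt) hinvc)
  have hsSc : ContinuousAt (sS (k := k)) p := by
    unfold sS
    refine tendsto_finset_sum _ fun i _ => tendsto_finset_sum _ fun j _ => ?_
    exact ContinuousAt.abs (ContinuousAt.comp (x := p)
      (g := fun M : Matrix (Fin k) (Fin k) ℝ => M i j)
      (((continuous_apply j).comp (continuous_apply i)).continuousAt) hfst)
  -- Gamma pieces
  have harg1 : ContinuousAt (fun q : Matrix (Fin k) (Fin k) ℝ × ℝ => (q.2 + 1) / 2) p :=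
    (hsnd.add continuousAt_const).div_const 2
  have harg2 : ContinuousAt (fun q : Matrix (Fin k) (Fin k) ℝ × ℝ => ((k : ℝ) + q.2) / 2) p :=
    (continuousAt_const.add hsnd).div_const 2
  have harg1pos : 0 < (p.2 + 1) / 2 := by linarith
  have harg2pos : 0 < ((k : ℝ) + p.2) / 2 := by positivity
  have hGne : ∀ x : ℝ, 0 < x → ∀ m : ℕ, x ≠ -(m : ℝ) := by
    intro x hx m hm; nlinarith [Nat.cast_nonneg (α := ℝ) m]
  have hG1c : ContinuousAt (fun q : Matrix (Fin k) (Fin k) ℝ × ℝ =>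
      Real.Gamma ((q.2 + 1) / 2)) p :=
    ContinuousAt.comp (x := p) (g := Real.Gamma)
      ((Real.differentiableAt_Gamma (hGne _ harg1pos)).continuousAt) harg1
  have hG2c : ContinuousAt (fun q : Matrix (Fin k) (Fin k) ℝ × ℝ =>
      Real.Gamma (((k : ℝ) + q.2) / 2)) p :=
    ContinuousAt.comp (x := p) (g := Real.Gamma)
      ((Real.differentiableAt_Gamma (hGne _ harg2pos)).continuousAt) harg2
  have hG1ne : Real.Gamma ((p.2 + 1) / 2) ≠ 0 := (Real.Gamma_pos_of_pos harg1pos).ne'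
  have hgD1c : ContinuousAt (fun q : Matrix (Fin k) (Fin k) ℝ × ℝ =>
      gammaD ((q.2 + 1) / 2)) p :=
    ContinuousAt.comp (x := p) (g := gammaD) (continuousAt_gammaD harg1pos) harg1
  have hgD2c : ContinuousAt (fun q : Matrix (Fin k) (Fin k) ℝ × ℝ =>
      gammaD (((k : ℝ) + q.2) / 2)) p :=
    ContinuousAt.comp (x := p) (g := gammaD) (continuousAt_gammaD harg2pos) harg2
  -- rpow pieces
  have hpowc : ContinuousAt (fun q : Matrix (Fin k) (Fin k) ℝ × ℝ => q.2 ^ (-(k : ℝ) + 1)) p :=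
    ContinuousAt.comp (x := p) (g := fun x : ℝ => x ^ (-(k : ℝ) + 1))
      (Real.continuousAt_rpow_const p.2 _ (Or.inl hν.ne')) hsnd
  have hpowc2 : ContinuousAt (fun q : Matrix (Fin k) (Fin k) ℝ × ℝ =>
      q.2 ^ (-(k : ℝ) + 1 - 1)) p :=
    ContinuousAt.comp (x := p) (g := fun x : ℝ => x ^ (-(k : ℝ) + 1 - 1))
      (Real.continuousAt_rpow_const p.2 _ (Or.inl hν.ne')) hsnd
  have hdetpc : ContinuousAt (fun q : Matrix (Fin k) (Fin k) ℝ × ℝ =>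
      q.1.det ^ (-(1 : ℝ) / 2)) p :=
    ContinuousAt.comp (x := p) (g := fun x : ℝ => x ^ (-(1 : ℝ) / 2))
      (Real.continuousAt_rpow_const p.1.det _ (Or.inl hdetne)) hdetc
  -- extTConst, Ad
  have hAc : ContinuousAt (fun q : Matrix (Fin k) (Fin k) ℝ × ℝ => extTConst k q.1 q.2) p := by
    unfold extTConst
    exact ((((continuousAt_const.mul (hG1c.inv₀ hG1ne)).mul hG2c).mul hpowc).mul hdetpc)
  have hAdc : ContinuousAt (fun q : Matrix (Fin k) (Fin k) ℝ × ℝ => Ad k q.1 q.2) p := by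
    unfold Ad
    refine (continuousAt_const.mul hdetpc).mul (ContinuousAt.add (ContinuousAt.add ?_ ?_) ?_)
    · exact (((hgD1c.mul continuousAt_const).neg.div (hG1c.pow 2)
        (pow_ne_zero 2 hG1ne)).mul hG2c).mul hpowc
    · exact ((hG1c.inv₀ hG1ne).mul (hgD2c.mul continuousAt_const)).mul hpowc
    · exact ((hG1c.inv₀ hG1ne).mul hG2c).mul (continuousAt_const.mul hpowc2)
  -- qlow, bmax
  have hsSne : sS p ≠ 0 := (hsSpos hk hp).ne'
  have hmSne : mS p ≠ 0 := (hmSpos hk hp).ne'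
  have hkne : ((k : ℝ)) ≠ 0 := Nat.cast_ne_zero.mpr hk.ne'
  have hqlowc : ContinuousAt (qlow k) p := by
    unfold qlow
    exact (ContinuousAt.comp (x := p) (g := fun x : ℝ => (k : ℝ) ^ x)
      (Real.continuousAt_const_rpow hkne)
      (continuousAt_const.div hsnd hν.ne')).div hsSc hsSne
  have hqlowne : qlow k p ≠ 0 := (hqlowpos hk hp).ne'
  have hexpc : ContinuousAt (fun q : Matrix (Fin k) (Fin k) ℝ × ℝ =>
      -((k : ℝ) + q.2) / 2) p := ((continuousAt_const.add hsnd).neg).div_const 2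
  have hbmaxc : ContinuousAt (bmax k) p := by
    unfold bmax
    exact hqlowc.rpow hexpc (Or.inl hqlowne)
  have hbmax2c : ContinuousAt (bmax2 k) p := by
    unfold bmax2
    exact hqlowc.rpow (hexpc.sub continuousAt_const) (Or.inl hqlowne)
  -- assemble
  unfold C4
  refine ContinuousAt.add (continuousAt_const.mul (ContinuousAt.add (hAdc.abs.mul hbmaxc)
    (hAc.mul (ContinuousAt.add ?_ ?_)))) ((hAc.mul hbmaxc).div (hsnd.pow 2) (by positivity))
  · exact (((continuousAt_const.add hsnd).mul hmSc).div hsnd hν.ne').mul hbmax2c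
  · exact ((((hqlowc.log hqlowne).abs.add ((hmSc.log hmSne).abs)).div_const 2).mul hbmaxc)
end cont

lemma dv_abs_le {x v : ℝ} (hx : 0 < x) (hx1 : x ≤ 1) (hv : 0 < v) :
    |-(1/v^2) * (x ^ (1/v) * Real.log x)| ≤ 1/v := by
  have hkey : x ^ (1/v) * (-Real.log x) ≤ v := by
    have h := rpow_neg_log_le hx hx1 (show (0:ℝ) < 1/v by positivity)
    rwa [one_div_one_div] at h
  have hlog : Real.log x ≤ 0 := Real.log_nonpos hx.le hx1
  have hxp : 0 < x ^ (1/v) := Real.rpow_pos_of_pos hx _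
  calc |-(1/v^2) * (x ^ (1/v) * Real.log x)|
      = 1/v^2 * (x ^ (1/v) * (-Real.log x)) := by
        rw [abs_mul, abs_neg, abs_of_pos (show (0:ℝ) < 1/v^2 by positivity), abs_mul,
          abs_of_pos hxp, abs_of_nonpos hlog]
    _ ≤ 1/v^2 * v := by
        have h2 : (0:ℝ) ≤ 1/v^2 := by positivity
        exact mul_le_mul_of_nonneg_left hkey h2
    _ = 1/v := by field_simp

lemma dot_mulVec_expand {k : ℕ} (M : Matrix (Fin k) (Fin k) ℝ) (a : Fin k → ℝ) :
    a ⬝ᵥ (M *ᵥ a) = ∑ i, ∑ j, a i * (M i j * a j) := by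
  simp [dotProduct, Matrix.mulVec, Finset.mul_sum]

lemma key {k : ℕ} (hk : 0 < k) {ε : ℝ} (hε : 0 < ε) {p : Matrix (Fin k) (Fin k) ℝ × ℝ}
    (hp : p ∈ extTParams k) {w : Fin k → ℝ} (hw : w ∈ intSimplex k) :
    DifferentiableAt ℝ (fun t => hExtT p.1 t w) p.2 ∧
      |deriv (fun t => hExtT p.1 t w) p.2|
        ≤ (C4 k ε p / ε) * ∏ i, (w i) ^ ((1 - p.2) / p.2 - ε) := by
  obtain ⟨hS, hdiag, hν⟩ := hp
  have hp' : p ∈ extTParams k := ⟨hS, hdiag, hν⟩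
  obtain ⟨hw1, hw2⟩ := hw
  have i0 : Fin k := ⟨0, hk⟩
  have hwle : ∀ i, w i ≤ 1 := fun i => by
    rw [← hw2]
    exact Finset.single_le_sum (fun j _ => (hw1 j).le) (Finset.mem_univ i)
  set S := p.1 with hSdef
  set ν := p.2 with hνdef
  set W := ∏ i, w i with hW
  have hW0 : 0 < W := Finset.prod_pos fun i _ => hw1 i
  have hW1 : W ≤ 1 := Finset.prod_le_one (fun i _ => (hw1 i).le) (fun i _ => hwle i)
  have hv0 : ∀ i, 0 < w i ^ (1/ν) := fun i => Real.rpow_pos_of_pos (hw1 i) _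
  have hv1 : ∀ i, w i ^ (1/ν) ≤ 1 := fun i =>
    Real.rpow_le_one (hw1 i).le (hwle i) (by positivity)
  have hvne : (fun i => w i ^ (1/ν)) ≠ 0 := by
    intro h0
    have h1 := congrFun h0 i0
    simp only [Pi.zero_apply] at h1
    exact absurd h1 (hv0 i0).ne'
  have hQpos : 0 < (fun i => w i ^ (1/ν)) ⬝ᵥ (S⁻¹ *ᵥ fun i => w i ^ (1/ν)) :=
    posdef_dot hS.inv hvne
  -- derivative of base rpow functions
  have hg : HasDerivAt (fun t : ℝ => 1 / t) (-(1 / ν ^ 2)) ν := by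
    simpa only [one_div] using hasDerivAt_inv hν.ne'
  set dv : Fin k → ℝ := fun i => -(1/ν^2) * (w i ^ (1/ν) * Real.log (w i)) with hdv
  have hvd : ∀ i, HasDerivAt (fun t : ℝ => w i ^ (1/t)) (dv i) ν := by
    intro i
    have h := (hasDerivAt_const ν (w i)).rpow hg (hw1 i)
    convert h using 1
    rw [hdv]; ring
  set Q' : ℝ := ∑ i, ∑ j, (dv i * (S⁻¹ i j * w j ^ (1/ν)) + w i ^ (1/ν) * (S⁻¹ i j * dv j))
    with hQ'
  have hQeq : (fun t : ℝ => (fun i => w i ^ (1/t)) ⬝ᵥ (S⁻¹ *ᵥ fun i => w i ^ (1/t)))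
      = fun t => ∑ i, ∑ j, (w i ^ (1/t)) * (S⁻¹ i j * (w j ^ (1/t))) := by
    funext t
    exact dot_mulVec_expand _ _
  have hQd : HasDerivAt
      (fun t : ℝ => (fun i => w i ^ (1/t)) ⬝ᵥ (S⁻¹ *ᵥ fun i => w i ^ (1/t))) Q' ν := by
    rw [hQeq, hQ']
    refine HasDerivAt.fun_sum fun i _ => HasDerivAt.fun_sum fun j _ => ?_
    exact (hvd i).mul ((hvd j).const_mul (S⁻¹ i j))
  have he : HasDerivAt (fun t : ℝ => -((k : ℝ) + t) / 2) (-1/2 : ℝ) ν := by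
    exact (((hasDerivAt_id ν).const_add ((k : ℝ))).neg).div_const 2
  have hBd := hQd.rpow he hQpos
  have hr : HasDerivAt (fun t : ℝ => (1 - t) / t) (-(1/ν^2)) ν := by
    have h := HasDerivAt.div ((hasDerivAt_const ν (1:ℝ)).sub (hasDerivAt_id ν))
      (hasDerivAt_id ν) hν.ne'
    exact h.congr_deriv (by simp only [id, Pi.sub_apply]; ring)
  have hPd : HasDerivAt (fun t : ℝ => W ^ ((1 - t) / t))
      (-(1/ν^2) * (W ^ ((1 - ν)/ν) * Real.log W)) ν := by
    have h := (hasDerivAt_const ν W).rpow hr hW0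
    convert h using 1
    ring
  have hAd := hasDerivAt_extTConst k S hν
  have hfun : (fun t => hExtT S t w)
      = fun t => extTConst k S t
        * ((fun i => w i ^ (1/t)) ⬝ᵥ (S⁻¹ *ᵥ fun i => w i ^ (1/t))) ^ (-((k : ℝ) + t) / 2)
        * W ^ ((1 - t) / t) := by
    funext t
    unfold hExtT
    rw [Real.finset_prod_rpow _ _ (fun i _ => (hw1 i).le), hW]
  have hD : HasDerivAt (fun t => hExtT S t w)
      ((Ad k S ν
          * ((fun i => w i ^ (1/ν)) ⬝ᵥ (S⁻¹ *ᵥ fun i => w i ^ (1/ν))) ^ (-((k : ℝ) + ν) / 2)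
        + extTConst k S ν
          * (Q' * (-((k : ℝ) + ν) / 2)
              * ((fun i => w i ^ (1/ν)) ⬝ᵥ (S⁻¹ *ᵥ fun i => w i ^ (1/ν))) ^ (-((k : ℝ) + ν) / 2 - 1)
            + -1/2 * ((fun i => w i ^ (1/ν)) ⬝ᵥ (S⁻¹ *ᵥ fun i => w i ^ (1/ν))) ^ (-((k : ℝ) + ν) / 2)
              * Real.log ((fun i => w i ^ (1/ν)) ⬝ᵥ (S⁻¹ *ᵥ fun i => w i ^ (1/ν)))))
        * W ^ ((1 - ν) / ν)
      + extTConst k S ν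
          * ((fun i => w i ^ (1/ν)) ⬝ᵥ (S⁻¹ *ᵥ fun i => w i ^ (1/ν))) ^ (-((k : ℝ) + ν) / 2)
          * (-(1/ν^2) * (W ^ ((1 - ν)/ν) * Real.log W))) ν := by
    rw [hfun]
    exact (hAd.mul hBd).mul hPd
  refine ⟨hD.differentiableAt, ?_⟩
  rw [hD.deriv]
  set Qv := (fun i => w i ^ (1/ν)) ⬝ᵥ (S⁻¹ *ᵥ fun i => w i ^ (1/ν)) with hQv
  set eb := -((k : ℝ) + ν) / 2 with heb
  set Pb := W ^ ((1 - ν)/ν) with hPbdef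
  set Ab := extTConst k S ν with hAb
  set Adv := Ad k S ν with hAdv
  -- positivity of constants
  have hAbpos : 0 < Ab := by
    rw [hAb, hSdef, hνdef]; exact hApos hp'
  have hqlowpos' : 0 < qlow k p := hqlowpos hk hp'
  have hmSpos' : 0 < mS p := hmSpos hk hp'
  have hsSpos' : 0 < sS p := hsSpos hk hp'
  have hbmaxpos' : 0 < bmax k p := Real.rpow_pos_of_pos hqlowpos' _
  have hbmax2pos' : 0 < bmax2 k p := Real.rpow_pos_of_pos hqlowpos' _
  have hbmaxeq : bmax k p = qlow k p ^ eb := by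
    unfold bmax; rw [heb, hνdef]
  have hbmax2eq : bmax2 k p = qlow k p ^ (eb - 1) := by
    unfold bmax2; rw [heb, hνdef]
  have hBpos : 0 < Qv ^ eb := Real.rpow_pos_of_pos hQpos _
  have hB2pos : 0 < Qv ^ (eb - 1) := Real.rpow_pos_of_pos hQpos _
  have hPbpos : 0 < Pb := by rw [hPbdef]; exact Real.rpow_pos_of_pos hW0 _
  have hebneg : eb ≤ 0 := by
    rw [heb]
    have h : (0:ℝ) ≤ (k : ℝ) + ν := by positivity
    linarith
  -- Q bounds
  have hs2pos : 0 < (fun i => w i ^ (1/ν)) ⬝ᵥ (S *ᵥ fun i => w i ^ (1/ν)) :=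
    posdef_dot hS hvne
  have hkpos : (0:ℝ) < (k : ℝ) := by exact_mod_cast hk
  have hQlow : qlow k p ≤ Qv := by
    have hcs := cs_ineq hS hvne
    have hs2le : (fun i => w i ^ (1/ν)) ⬝ᵥ (S *ᵥ fun i => w i ^ (1/ν)) ≤ sS p := by
      rw [dot_mulVec_expand]
      have hsSeq : sS p = ∑ i, ∑ j, |S i j| := by unfold sS; rw [hSdef]
      rw [hsSeq]
      exact Finset.sum_le_sum fun i _ => Finset.sum_le_sum fun j _ =>
        term_le_abs (hv0 i).le (hv1 i) (hv0 j).le (hv1 j)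
    have hne : (Finset.univ : Finset (Fin k)).Nonempty := ⟨i0, Finset.mem_univ i0⟩
    have hsum : ∑ _i : Fin k, (1/(k:ℝ)) ≤ ∑ i, w i := by
      rw [hw2, Finset.sum_const, Finset.card_univ, Fintype.card_fin, nsmul_eq_mul,
        mul_one_div, div_self (show (k:ℝ) ≠ 0 from hkpos.ne')]
    obtain ⟨j, _, hj⟩ := Finset.exists_le_of_sum_le hne hsum
    have h1 : (1/(k:ℝ)) ^ ((1:ℝ)/ν) ≤ w j ^ ((1:ℝ)/ν) :=
      Real.rpow_le_rpow (by positivity) hj (by positivity)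
    have h2 : (1/(k:ℝ)) ^ ((1:ℝ)/ν) = (k:ℝ) ^ (-((1:ℝ)/ν)) := by
      rw [Real.rpow_neg hkpos.le, one_div, Real.inv_rpow hkpos.le]
    have hvj : (k:ℝ) ^ (-((1:ℝ)/ν)) ≤ w j ^ (1/ν) := by rw [← h2]; exact h1
    have hdotself : (fun i => w i ^ (1/ν)) ⬝ᵥ (fun i => w i ^ (1/ν))
        = ∑ i, w i ^ (1/ν) * w i ^ (1/ν) := rfl
    have hu_lb : (k:ℝ) ^ (-(2:ℝ)/ν)
        ≤ (fun i => w i ^ (1/ν)) ⬝ᵥ (fun i => w i ^ (1/ν)) := by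
      rw [hdotself]
      calc (k:ℝ) ^ (-(2:ℝ)/ν) = (k:ℝ) ^ (-((1:ℝ)/ν)) * (k:ℝ) ^ (-((1:ℝ)/ν)) := by
            rw [← Real.rpow_add hkpos]; congr 1; ring
        _ ≤ w j ^ (1/ν) * w j ^ (1/ν) :=
            mul_le_mul hvj hvj (Real.rpow_nonneg hkpos.le _) (hv0 j).le
        _ ≤ ∑ i, w i ^ (1/ν) * w i ^ (1/ν) :=
            Finset.single_le_sum (f := fun i => w i ^ (1/ν) * w i ^ (1/ν))
              (fun i _ => mul_nonneg (hv0 i).le (hv0 i).le) (Finset.mem_univ j)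
    have hunn : 0 ≤ (fun i => w i ^ (1/ν)) ⬝ᵥ (fun i => w i ^ (1/ν)) :=
      (Real.rpow_nonneg hkpos.le _).trans hu_lb
    have hu2 : (k:ℝ) ^ (-(4:ℝ)/ν)
        ≤ ((fun i => w i ^ (1/ν)) ⬝ᵥ (fun i => w i ^ (1/ν)))^2 := by
      calc (k:ℝ) ^ (-(4:ℝ)/ν) = (k:ℝ) ^ (-(2:ℝ)/ν) * (k:ℝ) ^ (-(2:ℝ)/ν) := by
            rw [← Real.rpow_add hkpos]; congr 1; ring
        _ ≤ ((fun i => w i ^ (1/ν)) ⬝ᵥ (fun i => w i ^ (1/ν)))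
            * ((fun i => w i ^ (1/ν)) ⬝ᵥ (fun i => w i ^ (1/ν))) :=
            mul_le_mul hu_lb hu_lb (Real.rpow_nonneg hkpos.le _) hunn
        _ = _ := (sq _).symm
    have hdiv : (k:ℝ) ^ (-(4:ℝ)/ν) / sS p
        ≤ ((fun i => w i ^ (1/ν)) ⬝ᵥ (fun i => w i ^ (1/ν)))^2
          / ((fun i => w i ^ (1/ν)) ⬝ᵥ (S *ᵥ fun i => w i ^ (1/ν))) :=
      div_le_div₀ (sq_nonneg _) hu2 hs2pos hs2le
    have h3 : ((fun i => w i ^ (1/ν)) ⬝ᵥ (fun i => w i ^ (1/ν)))^2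
          / ((fun i => w i ^ (1/ν)) ⬝ᵥ (S *ᵥ fun i => w i ^ (1/ν))) ≤ Qv := by
      rw [div_le_iff₀ hs2pos, hQv]
      exact hcs
    have hqloweq : qlow k p = (k:ℝ) ^ (-(4:ℝ)/ν) / sS p := by
      unfold qlow; rw [hνdef]
    rw [hqloweq]
    linarith
  have hQhigh : Qv ≤ mS p := by
    rw [hQv, dot_mulVec_expand]
    have hmSeq : mS p = ∑ i, ∑ j, |S⁻¹ i j| := by unfold mS; rw [hSdef]
    rw [hmSeq]
    exact Finset.sum_le_sum fun i _ => Finset.sum_le_sum fun j _ =>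
      term_le_abs (hv0 i).le (hv1 i) (hv0 j).le (hv1 j)
  have hdvb : ∀ i, |dv i| ≤ 1/ν := by
    intro i
    rw [hdv]
    exact dv_abs_le (hw1 i) (hwle i) hν
  have htermb : ∀ i j, |dv i * (S⁻¹ i j * w j ^ (1/ν)) + w i ^ (1/ν) * (S⁻¹ i j * dv j)|
      ≤ |S⁻¹ i j| * (2/ν) := by
    intro i j
    have hb1 : |dv i * (S⁻¹ i j * w j ^ (1/ν))| ≤ (1/ν) * |S⁻¹ i j| := by
      rw [abs_mul]
      have h2 : |S⁻¹ i j * w j ^ (1/ν)| ≤ |S⁻¹ i j| := by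
        rw [abs_mul, abs_of_pos (hv0 j)]
        exact mul_le_of_le_one_right (abs_nonneg _) (hv1 j)
      exact mul_le_mul (hdvb i) h2 (abs_nonneg _) (by positivity)
    have hb2 : |w i ^ (1/ν) * (S⁻¹ i j * dv j)| ≤ |S⁻¹ i j| * (1/ν) := by
      rw [abs_mul]
      have h2 : |S⁻¹ i j * dv j| ≤ |S⁻¹ i j| * (1/ν) := by
        rw [abs_mul]
        exact mul_le_mul_of_nonneg_left (hdvb j) (abs_nonneg _)
      have h3 : |w i ^ (1/ν)| ≤ 1 := by rw [abs_of_pos (hv0 i)]; exact hv1 i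
      calc |w i ^ (1/ν)| * |S⁻¹ i j * dv j| ≤ 1 * (|S⁻¹ i j| * (1/ν)) :=
            mul_le_mul h3 h2 (abs_nonneg _) one_pos.le
        _ = |S⁻¹ i j| * (1/ν) := one_mul _
    calc |dv i * (S⁻¹ i j * w j ^ (1/ν)) + w i ^ (1/ν) * (S⁻¹ i j * dv j)|
        ≤ |dv i * (S⁻¹ i j * w j ^ (1/ν))| + |w i ^ (1/ν) * (S⁻¹ i j * dv j)| := abs_add_le _ _
      _ ≤ (1/ν) * |S⁻¹ i j| + |S⁻¹ i j| * (1/ν) := add_le_add hb1 hb2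
      _ = |S⁻¹ i j| * (2/ν) := by ring
  have hQ'b : |Q'| ≤ 2 * mS p / ν := by
    have hmSeq : mS p = ∑ i, ∑ j, |S⁻¹ i j| := by unfold mS; rw [hSdef]
    calc |Q'| ≤ ∑ i, |∑ j, (dv i * (S⁻¹ i j * w j ^ (1/ν)) + w i ^ (1/ν) * (S⁻¹ i j * dv j))| := by
          rw [hQ']
          exact Finset.abs_sum_le_sum_abs _ _
      _ ≤ ∑ i, ∑ j, |dv i * (S⁻¹ i j * w j ^ (1/ν)) + w i ^ (1/ν) * (S⁻¹ i j * dv j)| :=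
          Finset.sum_le_sum fun i _ => Finset.abs_sum_le_sum_abs _ _
      _ ≤ ∑ i, ∑ j, |S⁻¹ i j| * (2/ν) :=
          Finset.sum_le_sum fun i _ => Finset.sum_le_sum fun j _ => htermb i j
      _ = (∑ i, ∑ j, |S⁻¹ i j|) * (2/ν) := by
          rw [Finset.sum_mul]
          exact Finset.sum_congr rfl fun i _ => (Finset.sum_mul _ _ _).symm
      _ = 2 * mS p / ν := by rw [hmSeq]; ring
  have hBb : Qv ^ eb ≤ bmax k p := by
    rw [hbmaxeq]
    exact Real.rpow_le_rpow_of_nonpos hqlowpos' hQlow hebneg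
  have hB2b : Qv ^ (eb - 1) ≤ bmax2 k p := by
    rw [hbmax2eq]
    exact Real.rpow_le_rpow_of_nonpos hqlowpos' hQlow (by linarith)
  have hlogQb : |Real.log Qv| ≤ |Real.log (qlow k p)| + |Real.log (mS p)| := by
    have h1 : Real.log Qv ≤ Real.log (mS p) := (Real.log_le_log_iff hQpos hmSpos').mpr hQhigh
    have h2 : Real.log (qlow k p) ≤ Real.log Qv :=
      (Real.log_le_log_iff hqlowpos' hQpos).mpr hQlow
    rw [abs_le]
    constructor
    · have h3 := neg_abs_le (Real.log (qlow k p))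
      have h4 := abs_nonneg (Real.log (mS p))
      linarith
    · have h3 := le_abs_self (Real.log (mS p))
      have h4 := abs_nonneg (Real.log (qlow k p))
      linarith
  -- W facts
  have hWεge : 1 ≤ W ^ (-ε) := by
    have h := Real.rpow_le_rpow_of_exponent_ge hW0 hW1 (show -ε ≤ 0 by linarith)
    rwa [Real.rpow_zero] at h
  have hlogWb : -Real.log W ≤ W ^ (-ε) / ε := neg_log_le_rpow_div hW0 hW1 hε
  have hprodeq : ∏ i, w i ^ ((1 - ν)/ν - ε) = Pb * W ^ (-ε) := by
    rw [Real.finset_prod_rpow _ _ (fun i _ => (hw1 i).le), ← hW, hPbdef, sub_eq_add_neg,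
      Real.rpow_add hW0]
  -- component bounds
  have hB'final : |Q' * eb * Qv ^ (eb - 1) + -1/2 * Qv ^ eb * Real.log Qv|
      ≤ ((k:ℝ) + ν) * mS p / ν * bmax2 k p
        + (|Real.log (qlow k p)| + |Real.log (mS p)|) / 2 * bmax k p := by
    have habs_eb : |eb| = ((k:ℝ) + ν)/2 := by
      rw [heb, abs_div, abs_neg, abs_of_nonneg (show (0:ℝ) ≤ (k:ℝ) + ν by positivity),
        abs_of_pos (show (0:ℝ) < 2 by norm_num)]
    calc |Q' * eb * Qv ^ (eb - 1) + -1/2 * Qv ^ eb * Real.log Qv|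
        ≤ |Q' * eb * Qv ^ (eb - 1)| + |-1/2 * Qv ^ eb * Real.log Qv| := abs_add_le _ _
      _ = |Q'| * (((k:ℝ) + ν)/2) * Qv ^ (eb - 1) + 1/2 * Qv ^ eb * |Real.log Qv| := by
          rw [abs_mul, abs_mul, habs_eb, abs_of_pos hB2pos, abs_mul, abs_mul,
            abs_of_pos hBpos]
          norm_num
      _ ≤ (2 * mS p / ν) * (((k:ℝ) + ν)/2) * bmax2 k p
          + 1/2 * bmax k p * (|Real.log (qlow k p)| + |Real.log (mS p)|) := by
          have hmSnn := hmSpos'.le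
          gcongr <;>
            first
              | exact hQ'b
              | exact hB2b
              | exact hBb
              | exact hlogQb
              | positivity
              | exact abs_nonneg _
      _ = ((k:ℝ) + ν) * mS p / ν * bmax2 k p
          + (|Real.log (qlow k p)| + |Real.log (mS p)|) / 2 * bmax k p := by ring
  have hP'final : |-(1/ν^2) * (Pb * Real.log W)| ≤ 1/ν^2 * (Pb * (W ^ (-ε)/ε)) := by
    rw [abs_mul, abs_neg, abs_of_pos (show (0:ℝ) < 1/ν^2 by positivity), abs_mul,
      abs_of_pos hPbpos, abs_of_nonpos (Real.log_nonpos hW0.le hW1)]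
    gcongr <;> first | exact hlogWb | positivity
  -- final assembly
  have hC4eq : C4 k ε p = ε * (|Adv| * bmax k p
      + Ab * (((k:ℝ) + ν) * mS p / ν * bmax2 k p
          + (|Real.log (qlow k p)| + |Real.log (mS p)|) / 2 * bmax k p))
    + Ab * bmax k p / ν ^ 2 := by
    unfold C4
    rw [hAb, hAdv, hSdef, hνdef]
  have hXnn : 0 ≤ |Adv| * bmax k p
      + Ab * (((k:ℝ) + ν) * mS p / ν * bmax2 k p
          + (|Real.log (qlow k p)| + |Real.log (mS p)|) / 2 * bmax k p) := by
    have h1 : 0 ≤ |Adv| * bmax k p := mul_nonneg (abs_nonneg _) hbmaxpos'.le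
    have h2 : 0 ≤ ((k:ℝ) + ν) * mS p / ν * bmax2 k p :=
      mul_nonneg (div_nonneg (mul_nonneg (by positivity) hmSpos'.le) hν.le) hbmax2pos'.le
    have h3 : 0 ≤ (|Real.log (qlow k p)| + |Real.log (mS p)|) / 2 * bmax k p :=
      mul_nonneg (by positivity) hbmaxpos'.le
    nlinarith [mul_nonneg hAbpos.le (add_nonneg h2 h3)]
  rw [hprodeq]
  calc |(Adv * Qv ^ eb
          + Ab * (Q' * eb * Qv ^ (eb - 1) + -1/2 * Qv ^ eb * Real.log Qv)) * Pb
        + Ab * Qv ^ eb * (-(1/ν^2) * (Pb * Real.log W))|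
      ≤ |(Adv * Qv ^ eb
          + Ab * (Q' * eb * Qv ^ (eb - 1) + -1/2 * Qv ^ eb * Real.log Qv)) * Pb|
        + |Ab * Qv ^ eb * (-(1/ν^2) * (Pb * Real.log W))| := abs_add_le _ _
    _ = |Adv * Qv ^ eb + Ab * (Q' * eb * Qv ^ (eb - 1) + -1/2 * Qv ^ eb * Real.log Qv)| * Pb
        + Ab * Qv ^ eb * |(-(1/ν^2) * (Pb * Real.log W))| := by
          rw [abs_mul, abs_of_pos hPbpos, abs_mul, abs_mul, abs_of_pos hAbpos,
            abs_of_pos hBpos]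
    _ ≤ (|Adv| * Qv ^ eb
          + Ab * |Q' * eb * Qv ^ (eb - 1) + -1/2 * Qv ^ eb * Real.log Qv|) * Pb
        + Ab * Qv ^ eb * |(-(1/ν^2) * (Pb * Real.log W))| := by
          gcongr
          calc |Adv * Qv ^ eb + Ab * (Q' * eb * Qv ^ (eb - 1) + -1/2 * Qv ^ eb * Real.log Qv)|
              ≤ |Adv * Qv ^ eb|
                + |Ab * (Q' * eb * Qv ^ (eb - 1) + -1/2 * Qv ^ eb * Real.log Qv)| := abs_add_le _ _
            _ = |Adv| * Qv ^ eb
                + Ab * |Q' * eb * Qv ^ (eb - 1) + -1/2 * Qv ^ eb * Real.log Qv| := by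
                rw [abs_mul, abs_of_pos hBpos, abs_mul, abs_of_pos hAbpos]
    _ ≤ (|Adv| * bmax k p
          + Ab * (((k:ℝ) + ν) * mS p / ν * bmax2 k p
              + (|Real.log (qlow k p)| + |Real.log (mS p)|) / 2 * bmax k p)) * Pb
        + Ab * bmax k p * (1/ν^2 * (Pb * (W ^ (-ε)/ε))) := by
          gcongr <;>
            first
              | exact hBb
              | exact hB'final
              | exact hP'final
              | exact abs_nonneg _
              | positivity
    _ ≤ (|Adv| * bmax k p
          + Ab * (((k:ℝ) + ν) * mS p / ν * bmax2 k p
              + (|Real.log (qlow k p)| + |Real.log (mS p)|) / 2 * bmax k p)) * (Pb * W ^ (-ε))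
        + Ab * bmax k p * (1/ν^2 * (Pb * (W ^ (-ε)/ε))) := by
          gcongr
          exact le_mul_of_one_le_right hPbpos.le hWεge
    _ = (C4 k ε p / ε) * (Pb * W ^ (-ε)) := by
          rw [hC4eq]
          field_simp



/-- bound on `∂_ν` of the extremal-t angular density, Lemma 4 of the
paper.  The partial derivative `∂_ν h_{Σ,ν}(w)` exists and, for every `ε > 0`, there is a
function `C₄ > 0`, continuous in `(Σ,ν)`, such that
`|∂_ν h_{Σ,ν}(w)| ≤ (C₄(Σ,ν)/ε) ∏ᵢ wᵢ^{(1−ν)/ν − ε}` for all parameters and all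
`w ∈ int(S^{k−1})`. -/
theorem stmt16 {k : ℕ} :
    (∀ p ∈ extTParams k, ∀ w ∈ intSimplex k,
      DifferentiableAt ℝ (fun t => hExtT p.1 t w) p.2) ∧
    ∀ ε : ℝ, 0 < ε →
      ∃ C₄ : Matrix (Fin k) (Fin k) ℝ × ℝ → ℝ,
        ContinuousOn C₄ (extTParams k) ∧ (∀ p ∈ extTParams k, 0 < C₄ p) ∧
        ∀ p ∈ extTParams k, ∀ w ∈ intSimplex k,
          |deriv (fun t => hExtT p.1 t w) p.2|
            ≤ (C₄ p / ε) * ∏ i, (w i) ^ ((1 - p.2) / p.2 - ε) := by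
  rcases Nat.eq_zero_or_pos k with hk0 | hk
  · subst hk0
    have hempty : ∀ w : Fin 0 → ℝ, w ∉ intSimplex 0 := by
      intro w hw
      have h := hw.2
      simp at h
    constructor
    · intro p _ w hw
      exact absurd hw (hempty w)
    · intro ε hε
      exact ⟨fun _ => 1, continuousOn_const, fun p _ => one_pos,
        fun p _ w hw => absurd hw (hempty w)⟩
  · constructor
    · intro p hp w hw
      exact (key hk one_pos hp hw).1
    · intro ε hε
      exact ⟨C4 k ε, contC4 hk ε, fun p hp => hC4pos hk hε hp,
        fun p hp w hw => (key hk hε hp hw).2⟩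

end
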